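/- Let R ≥ 1, M, K > 0, and let g : [R,∞) → ℝ be C² with |g(r)| ≤ M/r⁶ and |Δ_r g(r)| ≤ K/r⁶ for all r ≥ R. Then there exists a constant C > 0 (depending only on M, K and R) such that |g'(r)| ≤ C/r⁵ for all r ≥ R. -/

import Mathlib

open Set Filter Topology

/-- The radial Laplacian `Δ_r g(r) = g''(r) + g'(r)/r`. -/
noncomputable def radLap (g : ℝ → ℝ) (r : ℝ) : ℝ := deriv (deriv g) r + deriv g r / r

theorem stmt18 (R M K : ℝ) (hR : 1 ≤ R) (hM : 0 < M) (hK : 0 < K)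
    (g : ℝ → ℝ) (hg : ContDiffOn ℝ 2 g (Set.Ici R))
    (hgb : ∀ r ≥ R, |g r| ≤ M / r ^ 6)
    (hlap : ∀ r ≥ R, |radLap g r| ≤ K / r ^ 6) :
    ∃ C > (0 : ℝ), ∀ r ≥ R, |deriv g r| ≤ C / r ^ 5 := by
  have hlog : 0 < Real.log 2 := Real.log_pos one_lt_two
  set C : ℝ := (2*M + K) / Real.log 2 with hC
  have hCpos : 0 < C := div_pos (by linarith) hlog
  -- differentiability facts on `Ioi R`
  have hgdiff : ∀ s ∈ Ioi R, HasDerivAt g (deriv g s) s := by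
    intro s hs
    exact ((hg.differentiableOn (by norm_num) s (mem_Ici.mpr (le_of_lt hs))).differentiableAt
      (Ici_mem_nhds hs)).hasDerivAt
  have hg1 : ContDiffOn ℝ 1 (deriv g) (Ioi R) :=
    (hg.mono Ioi_subset_Ici_self).deriv_of_isOpen isOpen_Ioi (by norm_num)
  have hg'cont : ContinuousOn (deriv g) (Ioi R) := hg1.continuousOn
  have hg'diff : ∀ s ∈ Ioi R, HasDerivAt (deriv g) (deriv (deriv g) s) s := by
    intro s hs
    exact ((hg1.differentiableOn one_ne_zero s hs).differentiableAt
      (Ioi_mem_nhds hs)).hasDerivAt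
  -- the main estimate, for `r > R`
  have main : ∀ r ∈ Ioi R, |deriv g r| ≤ C / r ^ 5 := by
    intro r hrm
    have hr : R < r := hrm
    have hr0 : (0:ℝ) < r := by linarith
    have hr1 : (1:ℝ) ≤ r := by linarith
    have hle : r ≤ 2*r := by linarith
    set u : ℝ → ℝ := fun s => s * deriv g s with hu
    have hsub : Icc r (2*r) ⊆ Ioi R := fun s hs => lt_of_lt_of_le hr hs.1
    have hud : ∀ s ∈ Icc r (2*r),
        HasDerivAt u (deriv g s + s * deriv (deriv g) s) s := by
      intro s hs
      have h := (hasDerivAt_id s).mul (hg'diff s (hsub hs))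
      simpa [hu, Pi.mul_def] using h
    have hbound : ∀ s ∈ Icc r (2*r),
        |deriv g s + s * deriv (deriv g) s| ≤ K / r^5 := by
      intro s hs
      have hsR : R ≤ s := le_of_lt (hsub hs)
      have hs0 : (0:ℝ) < s := by linarith
      have h1 : deriv g s + s * deriv (deriv g) s = s * radLap g s := by
        simp only [radLap]; field_simp; ring
      rw [h1, abs_mul, abs_of_pos hs0]
      calc s * |radLap g s| ≤ s * (K / s^6) :=
            mul_le_mul_of_nonneg_left (hlap s hsR) hs0.le
        _ = K / s^5 := by field_simp
        _ ≤ K / r^5 := by gcongr; exact hs.1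
    have hmv : ∀ s ∈ Icc r (2*r), |u s - u r| ≤ K / r^5 * (s - r) := by
      intro s hs
      have h := Convex.norm_image_sub_le_of_norm_hasDerivWithin_le
        (f := u) (f' := fun s => deriv g s + s * deriv (deriv g) s)
        (fun x hx => (hud x hx).hasDerivWithinAt)
        (fun x hx => by simpa [Real.norm_eq_abs] using hbound x hx)
        (convex_Icc r (2*r)) (left_mem_Icc.mpr hle) hs
      have hsr : r ≤ s := hs.1
      simpa [Real.norm_eq_abs, abs_of_nonneg (sub_nonneg.mpr hsr)] using h
    have hptw : ∀ s ∈ Icc r (2*r), |deriv g s - u r / s| ≤ K / r^5 := by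
      intro s hs
      have hs0 : (0:ℝ) < s := lt_of_lt_of_le hr0 hs.1
      have he : deriv g s - u r / s = (u s - u r) / s := by
        field_simp [hu]; ring
      rw [he, abs_div, abs_of_pos hs0]
      have h2 : |u s - u r| ≤ K / r^4 := by
        calc |u s - u r| ≤ K/r^5 * (s - r) := hmv s hs
          _ ≤ K/r^5 * r := by gcongr; linarith [hs.2]
          _ = K/r^4 := by field_simp
      calc |u s - u r| / s ≤ (K/r^4) / r := div_le_div₀ (by positivity) h2 hr0 hs.1
        _ = K / r^5 := by rw [div_div, ← pow_succ]
    have huIcc : uIcc r (2*r) = Icc r (2*r) := uIcc_of_le hle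
    have hcont' : ContinuousOn (deriv g) (Icc r (2*r)) := hg'cont.mono hsub
    have hint1 : IntervalIntegrable (deriv g) MeasureTheory.volume r (2*r) := by
      apply ContinuousOn.intervalIntegrable
      rwa [huIcc]
    have hint2 : IntervalIntegrable (fun s => u r / s) MeasureTheory.volume r (2*r) := by
      apply ContinuousOn.intervalIntegrable
      rw [huIcc]
      apply ContinuousOn.div continuousOn_const continuousOn_id
      intro x hx
      have : (0:ℝ) < x := lt_of_lt_of_le hr0 hx.1
      exact ne_of_gt this
    have hftc : ∫ s in r..(2*r), deriv g s = g (2*r) - g r := by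
      apply intervalIntegral.integral_eq_sub_of_hasDerivAt
      · intro s hs
        rw [huIcc] at hs
        exact hgdiff s (hsub hs)
      · exact hint1
    have hlogint : ∫ s in r..(2*r), u r / s = u r * Real.log 2 := by
      have h0 : (0:ℝ) ∉ uIcc r (2*r) := by
        rw [huIcc]
        intro h
        exact absurd h.1 (by linarith)
      have h1 : ∫ s in r..(2*r), u r / s = u r * ∫ s in r..(2*r), 1/s := by
        rw [← intervalIntegral.integral_const_mul]
        congr 1; ext s; ring
      rw [h1, integral_one_div h0]
      congr 1
      rw [show (2*r)/r = 2 by field_simp]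
    have hsplit : ∫ s in r..(2*r), u r / s
        = (∫ s in r..(2*r), deriv g s) - ∫ s in r..(2*r), (deriv g s - u r / s) := by
      rw [intervalIntegral.integral_sub hint1 hint2]
      ring
    have herr : |∫ s in r..(2*r), (deriv g s - u r / s)| ≤ K/r^5 * |2*r - r| := by
      have h := intervalIntegral.norm_integral_le_of_norm_le_const
        (C := K/r^5) (f := fun s => deriv g s - u r / s)
        (a := r) (b := 2*r) ?_
      · simpa [Real.norm_eq_abs] using h
      · intro s hs
        rw [uIoc_of_le hle] at hs
        simpa [Real.norm_eq_abs] using hptw s ⟨le_of_lt hs.1, hs.2⟩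
    have h2rR : R ≤ 2*r := by linarith
    have h46 : r^4 ≤ r^6 := pow_le_pow_right₀ hr1 (by norm_num)
    have h66 : r^6 ≤ (2*r)^6 := pow_le_pow_left₀ hr0.le (by linarith) 6
    have hg2r : |g (2*r)| ≤ M / r^4 := by
      refine le_trans (hgb _ h2rR) ?_
      apply div_le_div_of_nonneg_left hM.le (by positivity) (le_trans h46 h66)
    have hgr : |g r| ≤ M / r^4 := by
      refine le_trans (hgb _ (le_of_lt hr)) ?_
      exact div_le_div_of_nonneg_left hM.le (by positivity) h46
    have hur : |u r| * Real.log 2 ≤ (2*M + K) / r^4 := by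
      calc |u r| * Real.log 2 = |u r * Real.log 2| := by
            rw [abs_mul (u r) (Real.log 2), abs_of_pos hlog]
        _ = |∫ s in r..(2*r), u r / s| := by rw [hlogint]
        _ = |(g (2*r) - g r) - ∫ s in r..(2*r), (deriv g s - u r / s)| := by
            rw [hsplit, hftc]
        _ ≤ |g (2*r) - g r| + |∫ s in r..(2*r), (deriv g s - u r / s)| :=
            abs_sub _ _
        _ ≤ (|g (2*r)| + |g r|) + K/r^5 * |2*r - r| :=
            add_le_add (abs_sub _ _) herr
        _ ≤ (M/r^4 + M/r^4) + K/r^5 * r := by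
            have habs : |2*r - r| = r := by
              rw [show 2*r - r = r by ring]
              exact abs_of_pos hr0
            rw [habs]
            exact add_le_add (add_le_add hg2r hgr) le_rfl
        _ = (2*M + K) / r^4 := by field_simp; ring
    have hurC : |u r| ≤ (2*M + K) / r^4 / Real.log 2 :=
      (le_div_iff₀ hlog).mpr hur
    have hdg : deriv g r = u r / r := by field_simp [hu]; simp only [hu]; ring
    rw [hdg, abs_div, abs_of_pos hr0]
    calc |u r| / r ≤ ((2*M + K) / r^4 / Real.log 2) / r :=
          div_le_div₀ (by positivity) hurC hr0 le_rfl
      _ = C / r^5 := by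
          have hrne : r ≠ 0 := ne_of_gt hr0
          have hlne : Real.log 2 ≠ 0 := ne_of_gt hlog
          rw [hC]
          field_simp
  refine ⟨C, hCpos, ?_⟩
  intro r hrR
  rcases eq_or_lt_of_le hrR with heq | hlt
  · -- r = R : argue by continuity from the right
    subst heq
    by_cases hd : DifferentiableAt ℝ g R
    · have hR0 : (0:ℝ) < R := by linarith
      set φ : ℝ → ℝ := derivWithin g (Ici R) with hφ
      have hφcont : ContinuousOn φ (Ici R) :=
        hg.continuousOn_derivWithin (uniqueDiffOn_Ici R) (by norm_num)
      have hφeq : ∀ s ∈ Ioi R, φ s = deriv g s := by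
        intro s hs
        exact derivWithin_of_mem_nhds (Ici_mem_nhds hs)
      have hφR : φ R = deriv g R :=
        hd.hasDerivAt.hasDerivWithinAt.derivWithin (uniqueDiffOn_Ici R R self_mem_Ici)
      have htend : Tendsto (fun s => |φ s|) (𝓝[>] R) (𝓝 |φ R|) :=
        ((hφcont R self_mem_Ici).mono Ioi_subset_Ici_self).abs
      have htend2 : Tendsto (fun s : ℝ => C / s^5) (𝓝[>] R) (𝓝 (C / R^5)) := by
        apply Tendsto.mono_left _ nhdsWithin_le_nhds
        exact (tendsto_const_nhds.div (Continuous.tendsto (by continuity) R)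
          (by positivity))
      have hev : ∀ᶠ s in 𝓝[>] R, |φ s| ≤ C / s^5 := by
        filter_upwards [self_mem_nhdsWithin] with s hs
        rw [hφeq s hs]
        exact main s hs
      have hfin := le_of_tendsto_of_tendsto htend htend2 hev
      rwa [hφR] at hfin
    · rw [deriv_zero_of_not_differentiableAt hd]
      simp only [abs_zero]
      positivity
  · exact main r hlt
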